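/- Let n and p be positive integers, M a real n × p matrix such that MᵀM is invertible, Φ a real symmetric positive definite p × p matrix, λ ≥ 0 a real number, and x ∈ ℝⁿ. Define ξ := (MᵀM + λΦ)⁻¹Mᵀx and ξ̃ := (MᵀM)⁻¹Mᵀx. Then ‖ξ‖² ≤ (λ_max(Φ)/λ_min(Φ))·‖ξ̃‖², where λ_max(Φ) and λ_min(Φ) are the largest and smallest eigenvalues of Φ and ‖·‖ denotes the Euclidean norm. -/

import Mathlib

open Matrix

lemma aux_inv_sub_inv {p : ℕ} (X D : Matrix (Fin p) (Fin p) ℝ)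
    (hX : IsUnit X.det) (hY : IsUnit (X + D).det) :
    X⁻¹ - (X + D)⁻¹ =
      (X + D)⁻¹ * D * (X + D)⁻¹ + (X + D)⁻¹ * (D * X⁻¹ * D) * (X + D)⁻¹ := by
  set Y := X + D with hYdef
  have h1 : X⁻¹ - Y⁻¹ = Y⁻¹ * (D * X⁻¹) := by
    have h : Y * (X⁻¹ - Y⁻¹) = D * X⁻¹ := by
      rw [mul_sub, mul_nonsing_inv _ hY, hYdef, add_mul, mul_nonsing_inv _ hX]
      abel
    calc X⁻¹ - Y⁻¹ = Y⁻¹ * (Y * (X⁻¹ - Y⁻¹)) := by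
          rw [← mul_assoc, nonsing_inv_mul _ hY, one_mul]
      _ = Y⁻¹ * (D * X⁻¹) := by rw [h]
  have h2 : D + D * X⁻¹ * D = D * X⁻¹ * Y := by
    rw [hYdef, mul_add, mul_assoc D X⁻¹ X, nonsing_inv_mul _ hX, mul_one]
  calc X⁻¹ - Y⁻¹ = Y⁻¹ * (D * X⁻¹) := h1
    _ = Y⁻¹ * ((D * X⁻¹ * Y) * Y⁻¹) := by
        rw [mul_assoc (D * X⁻¹) Y Y⁻¹, mul_nonsing_inv _ hY, mul_one]
    _ = Y⁻¹ * D * Y⁻¹ + Y⁻¹ * (D * X⁻¹ * D) * Y⁻¹ := by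
        rw [← h2]; noncomm_ring

lemma aux_quad {p : ℕ} {Φ : Matrix (Fin p) (Fin p) ℝ} (hH : Φ.IsHermitian)
    (v : Fin p → ℝ) :
    ∃ w : Fin p → ℝ, v ⬝ᵥ (Φ *ᵥ v) = ∑ i, hH.eigenvalues i * w i ^ 2 ∧
      v ⬝ᵥ v = ∑ i, w i ^ 2 := by
  set u : Matrix (Fin p) (Fin p) ℝ := (hH.eigenvectorUnitary : Matrix (Fin p) (Fin p) ℝ) with hu
  have hmem := (hH.eigenvectorUnitary).2
  have h2 : u * star u = 1 := hmem.2
  have hv : v ᵥ* u = star u *ᵥ v := by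
    have := star_mulVec (star u) v
    rw [star_eq_conjTranspose, conjTranspose_eq_transpose_of_trivial, mulVec_transpose]
  refine ⟨star u *ᵥ v, ?_, ?_⟩
  · conv_lhs => rw [hH.spectral_theorem]
    have h3 : (RCLike.ofReal ∘ hH.eigenvalues : Fin p → ℝ) = hH.eigenvalues := by
      ext i; simp
    rw [h3, Unitary.conjStarAlgAut_apply, ← hu, ← mulVec_mulVec, ← mulVec_mulVec, dotProduct_mulVec v u, hv]
    simp only [dotProduct, mulVec_diagonal]
    exact Finset.sum_congr rfl fun i _ => by ring
  · have : (star u *ᵥ v) ⬝ᵥ (star u *ᵥ v) = v ⬝ᵥ v := by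
      rw [← hv, ← dotProduct_mulVec, hv, mulVec_mulVec, h2, one_mulVec]
    rw [← this]
    simp [dotProduct, pow_two]

lemma aux_smul_psd {p : ℕ} {A : Matrix (Fin p) (Fin p) ℝ} (hA : A.PosSemidef)
    {c : ℝ} (hc : 0 ≤ c) : (c • A).PosSemidef := by
  refine PosSemidef.of_dotProduct_mulVec_nonneg ?_ fun y => ?_
  · show (c • A)ᴴ = c • A
    rw [conjTranspose_smul, star_trivial, hA.1.eq]
  · rw [smul_mulVec, dotProduct_smul, smul_eq_mul]
    exact mul_nonneg hc (hA.dotProduct_mulVec_nonneg y)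

theorem stmt13 (n p : ℕ) (hn : 0 < n) (hp : 0 < p)
    (M : Matrix (Fin n) (Fin p) ℝ) (hM : IsUnit (Mᵀ * M))
    (Φ : Matrix (Fin p) (Fin p) ℝ) (hΦ : Φ.PosDef)
    (l : ℝ) (hl : 0 ≤ l) (x : Fin n → ℝ) :
    ∑ i, ((Mᵀ * M + l • Φ)⁻¹ *ᵥ (Mᵀ *ᵥ x)) i ^ 2 ≤
      ((⨆ i, hΦ.1.eigenvalues i) / (⨅ i, hΦ.1.eigenvalues i)) *
        ∑ i, ((Mᵀ * M)⁻¹ *ᵥ (Mᵀ *ᵥ x)) i ^ 2 := by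
  classical
  have hpne : Nonempty (Fin p) := ⟨⟨0, hp⟩⟩
  set A := Mᵀ * M with hAdef
  set C := A + l • Φ with hCdef
  set b := Mᵀ *ᵥ x with hbdef
  -- basic positivity facts
  have hAH : A.IsHermitian := by
    show Aᴴ = A
    rw [conjTranspose_eq_transpose_of_trivial, hAdef, transpose_mul, transpose_transpose]
  have hApd : A.PosDef := by
    refine PosDef.of_dotProduct_mulVec_pos hAH fun y hy => ?_
    have hq : star y ⬝ᵥ (A *ᵥ y) = (M *ᵥ y) ⬝ᵥ (M *ᵥ y) := by
      rw [star_trivial, hAdef, ← mulVec_mulVec, dotProduct_mulVec, vecMul_transpose]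
    rw [hq]
    rcases eq_or_ne (M *ᵥ y) 0 with h0 | h0
    · exfalso
      have hinj : Function.Injective (A.mulVec) := mulVec_injective_iff_isUnit.mpr hM
      have : A *ᵥ y = A *ᵥ 0 := by
        rw [hAdef, ← mulVec_mulVec, h0]; simp
      exact hy (hinj this)
    · have hnn : 0 ≤ (M *ᵥ y) ⬝ᵥ (M *ᵥ y) := by
        have := dotProduct_star_self_nonneg (M *ᵥ y)
        simpa using this
      rcases hnn.lt_or_eq with h | h
      · exact h
      · exact absurd (dotProduct_self_eq_zero.mp h.symm) h0
  have hΦu : IsUnit Φ.det := hΦ.det_pos.ne'.isUnit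
  have hAu : IsUnit A.det := (isUnit_iff_isUnit_det A).mp hM
  have hlΦ : (l • Φ).PosSemidef := aux_smul_psd hΦ.posSemidef hl
  have hCpd : C.PosDef := hApd.add_posSemidef hlΦ
  have hCu : IsUnit C.det := hCpd.det_pos.ne'.isUnit
  have hAiH : A⁻¹.IsHermitian := hAH.inv
  have hCiH : C⁻¹.IsHermitian := hCpd.1.inv
  -- set up the Loewner comparison
  set D := (2 * l) • A + (l ^ 2) • Φ with hDdef
  have hDpsd : D.PosSemidef :=
    (aux_smul_psd hApd.posSemidef (by linarith)).add (aux_smul_psd hΦ.posSemidef (sq_nonneg l))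
  set X := A * Φ⁻¹ * A with hXdef
  have e1 : A * Φ⁻¹ * (l • Φ) = l • A := by
    rw [Matrix.mul_smul, mul_assoc, nonsing_inv_mul _ hΦu, mul_one]
  have e2 : (l • Φ) * Φ⁻¹ * A = l • A := by
    rw [Matrix.smul_mul, Matrix.smul_mul, mul_nonsing_inv _ hΦu, one_mul]
  have e3 : (l • Φ) * Φ⁻¹ * (l • Φ) = (l ^ 2) • Φ := by
    rw [Matrix.smul_mul, mul_nonsing_inv _ hΦu, Matrix.smul_mul, one_mul, smul_smul, pow_two]
  have hXY : X + D = C * Φ⁻¹ * C := by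
    rw [hCdef, hXdef, hDdef, add_mul, add_mul, mul_add, mul_add, e1, e2, e3]
    rw [two_mul, add_smul]
    abel
  have hXu : IsUnit X := (hM.mul (isUnit_nonsing_inv_iff.mpr hΦ.isUnit)).mul hM
  have hXdu : IsUnit X.det := (isUnit_iff_isUnit_det X).mp hXu
  have hYdu : IsUnit (X + D).det := by
    rw [hXY]
    exact (isUnit_iff_isUnit_det _).mp
      ((hCpd.isUnit.mul (isUnit_nonsing_inv_iff.mpr hΦ.isUnit)).mul hCpd.isUnit)
  have hXinv : X⁻¹ = A⁻¹ * Φ * A⁻¹ := by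
    rw [hXdef, Matrix.mul_inv_rev, Matrix.mul_inv_rev, nonsing_inv_nonsing_inv _ hΦu, ← mul_assoc]
  have hYinv : (X + D)⁻¹ = C⁻¹ * Φ * C⁻¹ := by
    rw [hXY, Matrix.mul_inv_rev, Matrix.mul_inv_rev, nonsing_inv_nonsing_inv _ hΦu, ← mul_assoc]
  have key := aux_inv_sub_inv X D hXdu hYdu
  rw [hXinv, hYinv] at key
  -- positive semidefiniteness of the difference
  set Q := C⁻¹ * Φ * C⁻¹ with hQdef
  set P := A⁻¹ * Φ * A⁻¹ with hPdef
  have hQH : Q.IsHermitian := by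
    have h := isHermitian_mul_mul_conjTranspose C⁻¹ hΦ.1
    rwa [hCiH.eq] at h
  have hPpsd : P.PosSemidef := by
    have h := hΦ.posSemidef.mul_mul_conjTranspose_same A⁻¹
    rwa [hAiH.eq] at h
  have hdiff : (P - Q).PosSemidef := by
    rw [key]
    refine PosSemidef.add ?_ ?_
    · have h := hDpsd.mul_mul_conjTranspose_same Q
      rwa [hQH.eq] at h
    · have hmid : (D * P * D).PosSemidef := by
        have h := hPpsd.mul_mul_conjTranspose_same D
        rwa [hDpsd.1.eq] at h
      have h := hmid.mul_mul_conjTranspose_same Q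
      rwa [hQH.eq] at h
  -- quadratic comparison at b
  have hcmp : b ⬝ᵥ (Q *ᵥ b) ≤ b ⬝ᵥ (P *ᵥ b) := by
    have h := hdiff.dotProduct_mulVec_nonneg b
    rw [star_trivial, sub_mulVec, dotProduct_sub] at h
    linarith
  -- rewrite quadratic forms as Φ-forms of the two solutions
  set ξ := C⁻¹ *ᵥ b with hξdef
  set ζ := A⁻¹ *ᵥ b with hζdef
  have hCsymm : C⁻¹ᵀ = C⁻¹ := by
    rw [← conjTranspose_eq_transpose_of_trivial, hCiH.eq]
  have hAsymm : A⁻¹ᵀ = A⁻¹ := by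
    rw [← conjTranspose_eq_transpose_of_trivial, hAiH.eq]
  have hq1 : b ⬝ᵥ (Q *ᵥ b) = ξ ⬝ᵥ (Φ *ᵥ ξ) := by
    rw [hQdef, ← mulVec_mulVec, ← mulVec_mulVec, dotProduct_mulVec, ← mulVec_transpose, hCsymm]
  have hq2 : b ⬝ᵥ (P *ᵥ b) = ζ ⬝ᵥ (Φ *ᵥ ζ) := by
    rw [hPdef, ← mulVec_mulVec, ← mulVec_mulVec, dotProduct_mulVec, ← mulVec_transpose, hAsymm]
  -- eigenvalue bounds
  obtain ⟨w1, hw1, hw1'⟩ := aux_quad hΦ.1 ξ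
  obtain ⟨w2, hw2, hw2'⟩ := aux_quad hΦ.1 ζ
  set a := ⨅ i, hΦ.1.eigenvalues i with hadef
  set s := ⨆ i, hΦ.1.eigenvalues i with hsdef
  have hapos : 0 < a := by
    obtain ⟨i0, hi0⟩ := exists_eq_ciInf_of_finite (f := hΦ.1.eigenvalues)
    rw [hadef, ← hi0]
    exact hΦ.eigenvalues_pos i0
  have hle : ∀ i, a ≤ hΦ.1.eigenvalues i := fun i =>
    ciInf_le (Set.finite_range _).bddBelow i
  have hge : ∀ i, hΦ.1.eigenvalues i ≤ s := fun i =>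
    le_ciSup (Set.finite_range _).bddAbove i
  have hsum1 : ∑ i, ξ i ^ 2 = ∑ i, w1 i ^ 2 := by
    rw [← hw1']; simp [dotProduct, pow_two]
  have hsum2 : ∑ i, ζ i ^ 2 = ∑ i, w2 i ^ 2 := by
    rw [← hw2']; simp [dotProduct, pow_two]
  have hlow : a * ∑ i, ξ i ^ 2 ≤ ξ ⬝ᵥ (Φ *ᵥ ξ) := by
    rw [hsum1, hw1, Finset.mul_sum]
    exact Finset.sum_le_sum fun i _ =>
      mul_le_mul_of_nonneg_right (hle i) (sq_nonneg _)
  have hhigh : ζ ⬝ᵥ (Φ *ᵥ ζ) ≤ s * ∑ i, ζ i ^ 2 := by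
    rw [hsum2, hw2, Finset.mul_sum]
    exact Finset.sum_le_sum fun i _ =>
      mul_le_mul_of_nonneg_right (hge i) (sq_nonneg _)
  -- combine
  have hmain : a * ∑ i, ξ i ^ 2 ≤ s * ∑ i, ζ i ^ 2 := by
    calc a * ∑ i, ξ i ^ 2 ≤ ξ ⬝ᵥ (Φ *ᵥ ξ) := hlow
      _ = b ⬝ᵥ (Q *ᵥ b) := hq1.symm
      _ ≤ b ⬝ᵥ (P *ᵥ b) := hcmp
      _ = ζ ⬝ᵥ (Φ *ᵥ ζ) := hq2
      _ ≤ s * ∑ i, ζ i ^ 2 := hhigh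
  rw [div_mul_eq_mul_div, le_div_iff₀ hapos]
  calc (∑ i, ξ i ^ 2) * a = a * ∑ i, ξ i ^ 2 := mul_comm _ _
    _ ≤ s * ∑ i, ζ i ^ 2 := hmain
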